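/- Let V be a finite-dimensional real inner product space and P ⊆ V a nonempty compact convex set. Let H : V → ℝ be differentiable, and suppose H has curvature constant at most C > 0 on P, i.e., for all γ, γ̂ ∈ P and α ∈ [0,1], with γ̄ = γ + α(γ̂ − γ), H(γ̄) − H(γ) − ⟨γ̄ − γ, ∇H(γ)⟩ ≤ (α²/2) C ‖γ̂ − γ‖² ≤ (α²/2) C · diam(P)²/diam(P)² · diam(P)² (that is, the generalized curvature constant of H over P is at most C). Define a sequence (γ^i) in P by choosing any γ^0 ∈ P and, for each i ≥ 0, letting s_i ∈ P attain the maximum δ_i = max_{s ∈ P} ⟨γ^i − s, ∇H(γ^i)⟩ and setting γ^{i+1} = γ^i + α_i (s_i − γ^i) with step size α_i = min{δ_i/C, 1}. Let h₀ = H(γ^0) − min_{γ ∈ P} H(γ). Then for every k ≥ 0, min_{0 ≤ i ≤ k} δ_i ≤ max{2h₀, C} / √(k+1). -/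
import Mathlib


open RealInnerProductSpace

/-- Theorem 1 (Convergence of SCG / nonconvex Frank–Wolfe): if `H` is
differentiable with generalized curvature constant at most `C > 0` over the
nonempty compact convex set `P`, and the iterates follow
`γ^{i+1} = γ^i + α_i (s_i − γ^i)` where `s_i` attains the Frank–Wolfe gap
`δ_i = max_{s ∈ P} ⟪γ^i − s, ∇H(γ^i)⟫` and `α_i = min{δ_i/C, 1}`, then with
`h₀ = H(γ^0) − min_P H`, for every `k ≥ 0`,
`min_{0 ≤ i ≤ k} δ_i ≤ max{2h₀, C}/√(k+1)`. -/
theorem scg_convergence {V : Type*} [NormedAddCommGroup V]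
    [InnerProductSpace ℝ V] [FiniteDimensional ℝ V]
    (P : Set V) (hPne : P.Nonempty) (hPcpt : IsCompact P) (hPconv : Convex ℝ P)
    (H : V → ℝ) (hH : Differentiable ℝ H) (C : ℝ) (hC : 0 < C)
    (hcurv : ∀ γ ∈ P, ∀ γ' ∈ P, ∀ α ∈ Set.Icc (0 : ℝ) 1,
      H (γ + α • (γ' - γ)) - H γ - ⟪γ + α • (γ' - γ) - γ, gradient H γ⟫
        ≤ α ^ 2 / 2 * C)
    (γ : ℕ → V) (s : ℕ → V) (δ : ℕ → ℝ)
    (hγ0 : γ 0 ∈ P) (hs : ∀ i, s i ∈ P)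
    (hδ : ∀ i, δ i = ⟪γ i - s i, gradient H (γ i)⟫)
    (hmax : ∀ i, ∀ t ∈ P, ⟪γ i - t, gradient H (γ i)⟫ ≤ δ i)
    (hiter : ∀ i, γ (i + 1) = γ i + min (δ i / C) 1 • (s i - γ i)) :
    ∀ k : ℕ, ∃ i ≤ k,
      δ i ≤ max (2 * (H (γ 0) - sInf (H '' P))) C / Real.sqrt (k + 1) := by
  intro k
  -- iterates stay in P
  have hmem : ∀ i, γ i ∈ P := by
    intro i
    induction i with
    | zero => exact hγ0
    | succ n ih =>
      have hδn : 0 ≤ δ n := by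
        have := hmax n (γ n) ih
        simpa using this
      have hα0 : 0 ≤ min (δ n / C) 1 := le_min (div_nonneg hδn hC.le) one_pos.le
      have hα1 : min (δ n / C) 1 ≤ 1 := min_le_right _ _
      have heq : γ (n+1) = (1 - min (δ n / C) 1) • γ n + min (δ n / C) 1 • s n := by
        rw [hiter n]; module
      rw [heq]
      exact hPconv ih (hs n) (by linarith) hα0 (by ring)
  have hδnn : ∀ i, 0 ≤ δ i := by
    intro i
    have := hmax i (γ i) (hmem i)
    simpa using this
  set φ : ℕ → ℝ := fun i => min (δ i ^ 2 / (2 * C)) (δ i / 2) with hφ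
  -- per-step descent
  have hdesc : ∀ i, φ i ≤ H (γ i) - H (γ (i+1)) := by
    intro i
    set α := min (δ i / C) 1 with hα
    have hα0 : 0 ≤ α := le_min (div_nonneg (hδnn i) hC.le) one_pos.le
    have hα1 : α ≤ 1 := min_le_right _ _
    have hcur := hcurv (γ i) (hmem i) (s i) (hs i) α ⟨hα0, hα1⟩
    have hip : ⟪γ i + α • (s i - γ i) - γ i, gradient H (γ i)⟫ = -(α * δ i) := by
      rw [add_sub_cancel_left, real_inner_smul_left]
      have h2 : ⟪s i - γ i, gradient H (γ i)⟫ = -(δ i) := by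
        rw [hδ i, ← inner_neg_left]
        congr 1
        abel
      rw [h2]; ring
    rw [hip] at hcur
    rw [hiter i, ← hα]
    have key : α * δ i - α^2/2 * C ≤ H (γ i) - H (γ i + α • (s i - γ i)) := by linarith
    rcases le_or_gt (δ i) C with hcase | hcase
    · have hαeq : α = δ i / C := min_eq_left (by rw [div_le_one hC]; exact hcase)
      have heq2 : α * δ i - α^2/2 * C = δ i ^ 2 / (2 * C) := by
        rw [hαeq]; field_simp; ring
      calc φ i ≤ δ i ^ 2 / (2 * C) := min_le_left _ _
        _ = α * δ i - α^2/2 * C := heq2.symm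
        _ ≤ _ := key
    · have hαeq : α = 1 := min_eq_right (by rw [le_div_iff₀ hC]; simpa using hcase.le)
      calc φ i ≤ δ i / 2 := min_le_right _ _
        _ ≤ α * δ i - α^2/2 * C := by rw [hαeq]; nlinarith
        _ ≤ _ := key
  -- telescoping
  have htel : ∀ n, (Finset.range n).sum φ ≤ H (γ 0) - H (γ n) := by
    intro n
    induction n with
    | zero => simp
    | succ m ih =>
      rw [Finset.sum_range_succ]
      have := hdesc m
      linarith
  -- infimum bound
  have hbdd : BddBelow (H '' P) := (hPcpt.image hH.continuous).bddBelow
  have hsInf_le : ∀ x ∈ P, sInf (H '' P) ≤ H x := fun x hx => csInf_le hbdd ⟨x, hx, rfl⟩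
  set h0 : ℝ := H (γ 0) - sInf (H '' P) with hh0
  have hh0nn : 0 ≤ h0 := by
    have := hsInf_le (γ 0) hγ0
    simp [hh0]; linarith
  set M : ℝ := max (2 * h0) C with hM
  have hMC : C ≤ M := le_max_right _ _
  have hMh0 : 2 * h0 ≤ M := le_max_left _ _
  have hMpos : 0 < M := lt_of_lt_of_le hC hMC
  -- pick the index with minimal φ
  obtain ⟨i, hi, hmin⟩ := Finset.exists_min_image (Finset.range (k+1)) φ ⟨0, by simp⟩
  have hik : i ≤ k := Nat.lt_succ_iff.mp (Finset.mem_range.mp hi)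
  refine ⟨i, hik, ?_⟩
  have hcardsum : (k+1 : ℝ) * φ i ≤ (Finset.range (k+1)).sum φ := by
    have := Finset.card_nsmul_le_sum (Finset.range (k+1)) φ (φ i) (fun j hj => hmin j hj)
    simpa [Finset.card_range, nsmul_eq_mul] using this
  have hsum_h0 : (k+1 : ℝ) * φ i ≤ h0 := by
    have h1 := htel (k+1)
    have h2 := hsInf_le (γ (k+1)) (hmem (k+1))
    have : H (γ 0) - H (γ (k+1)) ≤ h0 := by rw [hh0]; linarith
    linarith
  have hk1pos : (0:ℝ) < (k:ℝ) + 1 := by positivity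
  have hsqrtpos : 0 < Real.sqrt (k+1) := Real.sqrt_pos.mpr hk1pos
  have hsq : Real.sqrt (k+1) ^ 2 = (k:ℝ) + 1 := Real.sq_sqrt hk1pos.le
  rcases le_or_gt (δ i) C with hcase | hcase
  · -- φ i = δ²/(2C)
    have hφeq : φ i = δ i ^ 2 / (2 * C) := by
      apply min_eq_left
      rw [div_le_div_iff₀ (by positivity) (by norm_num)]
      nlinarith [hδnn i]
    rw [hφeq] at hsum_h0
    -- δ² (k+1) ≤ 2 C h0 ≤ M²
    have hsq_le : δ i ^ 2 * ((k:ℝ)+1) ≤ M ^ 2 := by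
      have h1 : δ i ^ 2 * ((k:ℝ)+1) ≤ 2 * C * h0 := by
        rw [← mul_div_assoc, div_le_iff₀ (by positivity : (0:ℝ) < 2 * C)] at hsum_h0
        nlinarith
      have h2 : 2 * C * h0 ≤ M ^ 2 := by nlinarith
      linarith
    have hgoal_sq : δ i ^ 2 ≤ (M / Real.sqrt (k+1)) ^ 2 := by
      rw [div_pow, hsq, le_div_iff₀ hk1pos]
      linarith
    have h1 := Real.sqrt_le_sqrt hgoal_sq
    rwa [Real.sqrt_sq (hδnn i), Real.sqrt_sq (by positivity)] at h1
  · -- φ i = δ/2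
    have hφeq : φ i = δ i / 2 := by
      apply min_eq_right
      rw [div_le_div_iff₀ (by norm_num) (by positivity)]
      nlinarith [hδnn i]
    rw [hφeq] at hsum_h0
    have h1 : δ i ≤ M / ((k:ℝ)+1) := by
      rw [le_div_iff₀ hk1pos]
      nlinarith
    have h2 : M / ((k:ℝ)+1) ≤ M / Real.sqrt (k+1) := by
      apply div_le_div_of_nonneg_left hMpos.le hsqrtpos
      calc Real.sqrt ((k:ℝ)+1) ≤ Real.sqrt (((k:ℝ)+1)^2) := by
            apply Real.sqrt_le_sqrt; nlinarith
        _ = (k:ℝ)+1 := Real.sqrt_sq hk1pos.le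
    linarith
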